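/- For i = 1,2, let P̃ᵢ be an almost surely discrete random probability measure on X such that for every fixed atom zᵢ of P̃ᵢ and every ε > 0 one has P(P̃ᵢ({zᵢ}) < ε) > 0, and assume Var_k(P̃ᵢ) > 0. If the kernel k is c₀-universal, then Corr_k(P̃₁,P̃₂) = 1 if and only if P̃₁ = P̃₂ almost surely. -/

import Mathlib

open MeasureTheory ProbabilityTheory Filter
open scoped RealInnerProductSpace ENNReal NNReal

noncomputable section

/-- A positive-definite function `k`. -/
def IsPosDef {X : Type*} (k : X → X → ℝ) : Prop :=
  ∀ (n : ℕ) (x : Fin n → X) (c : Fin n → ℝ),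
    0 ≤ ∑ i : Fin n, ∑ j : Fin n, c i * c j * k (x i) (x j)

/-- A bounded, measurable, symmetric, positive-definite kernel. -/
structure IsKernel {X : Type*} [MeasurableSpace X] (k : X → X → ℝ) : Prop where
  measurable : Measurable (Function.uncurry k)
  bounded : ∃ C : ℝ, ∀ x y, |k x y| ≤ C
  symm : ∀ x y, k x y = k y x
  posDef : IsPosDef k

/-- A realization of the reproducing kernel Hilbert space of `k`: a Hilbert space together with
a feature map reproducing `k` whose feature vectors span a dense subspace. -/
structure FeatureMap {X : Type*} [MeasurableSpace X] (k : X → X → ℝ)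
    (H : Type*) [NormedAddCommGroup H] [InnerProductSpace ℝ H] : Type _ where
  toFun : X → H
  stronglyMeasurable : StronglyMeasurable toFun
  repro : ∀ x y, ⟪toFun x, toFun y⟫ = k x y
  dense_span : Dense (Submodule.span ℝ (Set.range toFun) : Set H)

/-- Kernel mean embedding of a measure, as a Bochner integral of the feature map. -/
def meanEmb {X : Type*} [MeasurableSpace X] {k : X → X → ℝ} {H : Type*}
    [NormedAddCommGroup H] [InnerProductSpace ℝ H] [CompleteSpace H]
    (F : FeatureMap k H) (μ : Measure X) : H :=
  ∫ x, F.toFun x ∂μ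

/-- Kernel covariance of two random probability measures,
`Cov_k(P₁,P₂) = E[⟪μ_k(P₁) - E[μ_k(P₁)], μ_k(P₂) - E[μ_k(P₂)]⟫]`. -/
def kerCov {X : Type*} [MeasurableSpace X] {k : X → X → ℝ} {H : Type*}
    [NormedAddCommGroup H] [InnerProductSpace ℝ H] [CompleteSpace H]
    {Ω : Type*} [MeasurableSpace Ω]
    (F : FeatureMap k H) (Pr : Measure Ω) (P₁ P₂ : Ω → Measure X) : ℝ :=
  ∫ ω, ⟪meanEmb F (P₁ ω) - ∫ ω', meanEmb F (P₁ ω') ∂Pr,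
        meanEmb F (P₂ ω) - ∫ ω', meanEmb F (P₂ ω') ∂Pr⟫ ∂Pr

/-- Kernel variance of a random probability measure. -/
def kerVar {X : Type*} [MeasurableSpace X] {k : X → X → ℝ} {H : Type*}
    [NormedAddCommGroup H] [InnerProductSpace ℝ H] [CompleteSpace H]
    {Ω : Type*} [MeasurableSpace Ω]
    (F : FeatureMap k H) (Pr : Measure Ω) (P : Ω → Measure X) : ℝ :=
  kerCov F Pr P P

/-- Kernel correlation of two random probability measures. -/
def kerCorr {X : Type*} [MeasurableSpace X] {k : X → X → ℝ} {H : Type*}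
    [NormedAddCommGroup H] [InnerProductSpace ℝ H] [CompleteSpace H]
    {Ω : Type*} [MeasurableSpace Ω]
    (F : FeatureMap k H) (Pr : Measure Ω) (P₁ P₂ : Ω → Measure X) : ℝ :=
  kerCov F Pr P₁ P₂ / (Real.sqrt (kerVar F Pr P₁) * Real.sqrt (kerVar F Pr P₂))

/-- Covariance of two real random variables. -/
def rCov {Ω : Type*} [MeasurableSpace Ω] (Pr : Measure Ω) (U V : Ω → ℝ) : ℝ :=
  ∫ ω, (U ω - ∫ ω', U ω' ∂Pr) * (V ω - ∫ ω', V ω' ∂Pr) ∂Pr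

/-- Variance of a real random variable. -/
def rVar {Ω : Type*} [MeasurableSpace Ω] (Pr : Measure Ω) (U : Ω → ℝ) : ℝ :=
  rCov Pr U U

/-- Pearson correlation of two real random variables. -/
def rCorr {Ω : Type*} [MeasurableSpace Ω] (Pr : Measure Ω) (U V : Ω → ℝ) : ℝ :=
  rCov Pr U V / (Real.sqrt (rVar Pr U) * Real.sqrt (rVar Pr V))

end

noncomputable section

/-- A kernel vanishes at infinity (is `c₀`). -/
def IsC0Kernel {Z : Type*} [TopologicalSpace Z] (k : Z → Z → ℝ) : Prop :=
  ∀ ε : ℝ, 0 < ε → ∀ y : Z, IsCompact {x : Z | ε ≤ |k x y|}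

/-- The kernel mean embedding of a bounded signed measure,
`μ_k(ξ)(y) = ∫ k(x,y) dξ(x)`, via the Jordan decomposition. -/
def signedMeanEmb {Z : Type*} [MeasurableSpace Z] (k : Z → Z → ℝ)
    (ξ : SignedMeasure Z) : Z → ℝ := fun y =>
  (∫ x, k x y ∂ξ.toJordanDecomposition.posPart)
    - ∫ x, k x y ∂ξ.toJordanDecomposition.negPart

/-- A kernel is `c₀`-universal if it is `c₀` and its kernel mean embedding is injective
on the space of bounded signed measures. -/
def IsC0Universal {Z : Type*} [TopologicalSpace Z] [MeasurableSpace Z]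
    (k : Z → Z → ℝ) : Prop :=
  IsC0Kernel k ∧ Function.Injective (signedMeanEmb k)

/-- A measure is discrete (purely atomic) if it is carried by a countable set. -/
def IsDiscreteMeasure {Z : Type*} [MeasurableSpace Z] (μ : Measure Z) : Prop :=
  ∃ S : Set Z, S.Countable ∧ μ Sᶜ = 0


section Aux

variable {X : Type*} [MeasurableSpace X] {k : X → X → ℝ}
  {H : Type*} [NormedAddCommGroup H] [InnerProductSpace ℝ H] [CompleteSpace H]

lemma featureMap_bound (hk : IsKernel k) (F : FeatureMap k H) :
    ∃ B : ℝ, 0 ≤ B ∧ ∀ x, ‖F.toFun x‖ ≤ B := by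
  obtain ⟨C, hC⟩ := hk.bounded
  refine ⟨Real.sqrt (max C 0), Real.sqrt_nonneg _, fun x => ?_⟩
  have h1 : ‖F.toFun x‖ ^ 2 = k x x := by
    rw [← F.repro x x, real_inner_self_eq_norm_mul_norm, sq]
  have h2 : ‖F.toFun x‖ ^ 2 ≤ max C 0 := by
    rw [h1]; exact le_max_of_le_left ((le_abs_self _).trans (hC x x))
  calc ‖F.toFun x‖ = Real.sqrt (‖F.toFun x‖ ^ 2) := (Real.sqrt_sq (norm_nonneg _)).symm
    _ ≤ Real.sqrt (max C 0) := Real.sqrt_le_sqrt h2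

lemma integrable_featureMap (hk : IsKernel k) (F : FeatureMap k H)
    (μ : Measure X) [IsFiniteMeasure μ] : Integrable F.toFun μ := by
  obtain ⟨B, _, hB⟩ := featureMap_bound hk F
  exact (integrable_const B).mono' F.stronglyMeasurable.aestronglyMeasurable
    (Filter.Eventually.of_forall hB)

lemma integrable_k (hk : IsKernel k) (y : X) (μ : Measure X) [IsFiniteMeasure μ] :
    Integrable (fun x => k x y) μ := by
  obtain ⟨C, hC⟩ := hk.bounded
  have hm : Measurable fun x => k x y :=
    hk.measurable.comp (measurable_id.prodMk measurable_const)
  exact (integrable_const C).mono' hm.aestronglyMeasurable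
    (Filter.Eventually.of_forall fun x => by rw [Real.norm_eq_abs]; exact hC x y)

lemma inner_meanEmb (hk : IsKernel k) (F : FeatureMap k H)
    (μ : Measure X) [IsFiniteMeasure μ] (y : X) :
    ⟪meanEmb F μ, F.toFun y⟫ = ∫ x, k x y ∂μ := by
  rw [real_inner_comm, meanEmb, ← integral_inner (integrable_featureMap hk F μ)]
  refine integral_congr_ae (Filter.Eventually.of_forall fun x => ?_)
  show ⟪F.toFun y, F.toFun x⟫ = k x y
  rw [F.repro, hk.symm]

lemma meanEmb_add_measure (hk : IsKernel k) (F : FeatureMap k H) (μ ν : Measure X)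
    [IsFiniteMeasure μ] [IsFiniteMeasure ν] :
    meanEmb F (μ + ν) = meanEmb F μ + meanEmb F ν :=
  integral_add_measure (integrable_featureMap hk F μ) (integrable_featureMap hk F ν)

lemma meanEmb_smul_nnreal (F : FeatureMap k H) (c : ℝ≥0) (μ : Measure X) :
    meanEmb F (c • μ) = (c : ℝ) • meanEmb F μ := by
  rw [meanEmb, meanEmb, integral_smul_nnreal_measure, NNReal.smul_def]

lemma meanEmb_injective (hk : IsKernel k) (F : FeatureMap k H)
    (hinj : Function.Injective (signedMeanEmb k))
    (A B : Measure X) [IsFiniteMeasure A] [IsFiniteMeasure B]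
    (h : meanEmb F A = meanEmb F B) : A = B := by
  set ξ : SignedMeasure X := A.toSignedMeasure - B.toSignedMeasure with hξdef
  have hpn : ξ.toJordanDecomposition.posPart.toSignedMeasure
      - ξ.toJordanDecomposition.negPart.toSignedMeasure = ξ :=
    ξ.toSignedMeasure_toJordanDecomposition
  have hmeq : ξ.toJordanDecomposition.posPart + B = ξ.toJordanDecomposition.negPart + A := by
    rw [← Measure.toSignedMeasure_eq_toSignedMeasure_iff, Measure.toSignedMeasure_add,
      Measure.toSignedMeasure_add]
    rw [hξdef] at hpn
    exact (sub_eq_sub_iff_add_eq_add.mp hpn).trans (add_comm _ _)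
  have hint : ∀ y : X, (∫ x, k x y ∂ξ.toJordanDecomposition.posPart) + ∫ x, k x y ∂B
      = (∫ x, k x y ∂ξ.toJordanDecomposition.negPart) + ∫ x, k x y ∂A := by
    intro y
    rw [← integral_add_measure (integrable_k hk y _) (integrable_k hk y _),
      ← integral_add_measure (integrable_k hk y _) (integrable_k hk y _), hmeq]
  have hzero : signedMeanEmb k ξ = signedMeanEmb k 0 := by
    funext y
    have h0 : signedMeanEmb k (0 : SignedMeasure X) y = 0 := by
      simp [signedMeanEmb, MeasureTheory.SignedMeasure.toJordanDecomposition_zero]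
    rw [h0]
    have h2 : (∫ x, k x y ∂A) = ∫ x, k x y ∂B := by
      rw [← inner_meanEmb hk F A y, ← inner_meanEmb hk F B y, h]
    have h1 := hint y
    show (∫ x, k x y ∂ξ.toJordanDecomposition.posPart)
      - (∫ x, k x y ∂ξ.toJordanDecomposition.negPart) = 0
    linarith
  have hξ0 : ξ = 0 := hinj hzero
  rw [hξdef] at hξ0
  rw [← Measure.toSignedMeasure_eq_toSignedMeasure_iff]
  exact sub_eq_zero.mp hξ0

lemma measure_countable_tsum [MeasurableSingletonClass X] {S : Set X} (hS : S.Countable)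
    (μ : Measure X) : μ S = ∑' z : S, μ {(z : X)} := by
  conv_lhs => rw [show S = ⋃ z ∈ S, {z} from (Set.biUnion_of_singleton S).symm]
  exact measure_biUnion hS
    (fun a _ b _ hab => Set.disjoint_singleton.2 hab)
    (fun b _ => measurableSet_singleton b)

lemma exists_atom_lt [MeasurableSingletonClass X] {μ ν : Measure X}
    (hμ : IsDiscreteMeasure μ) (hlt : ν Set.univ < μ Set.univ) :
    ∃ z : X, ν {z} < μ {z} := by
  by_contra hcon
  push_neg at hcon
  obtain ⟨S, hSc, hS0⟩ := hμ
  have h1 : μ Set.univ ≤ μ S := by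
    calc μ Set.univ = μ (S ∪ Sᶜ) := by rw [Set.union_compl_self]
      _ ≤ μ S + μ Sᶜ := measure_union_le _ _
      _ = μ S := by rw [hS0, add_zero]
  have h2 : μ S ≤ ν Set.univ := by
    calc μ S = ∑' z : S, μ {(z : X)} := measure_countable_tsum hSc μ
      _ ≤ ∑' z : S, ν {(z : X)} := ENNReal.tsum_le_tsum fun z => hcon z
      _ = ν S := (measure_countable_tsum hSc ν).symm
      _ ≤ ν Set.univ := measure_mono (Set.subset_univ S)
  exact absurd ((h1.trans h2).trans_lt hlt) (lt_irrefl _)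

lemma discrete_ext [MeasurableSingletonClass X] {μ ν : Measure X}
    (hμ : IsDiscreteMeasure μ) (hν : IsDiscreteMeasure ν)
    (h : ∀ z : X, μ {z} = ν {z}) : μ = ν := by
  obtain ⟨S₁, hS₁c, hS₁0⟩ := hμ
  obtain ⟨S₂, hS₂c, hS₂0⟩ := hν
  have hSc : (S₁ ∪ S₂).Countable := hS₁c.union hS₂c
  have hSm : MeasurableSet (S₁ ∪ S₂) := hSc.measurableSet
  have hμS : μ (S₁ ∪ S₂)ᶜ = 0 :=
    measure_mono_null (Set.compl_subset_compl.2 Set.subset_union_left) hS₁0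
  have hνS : ν (S₁ ∪ S₂)ᶜ = 0 :=
    measure_mono_null (Set.compl_subset_compl.2 Set.subset_union_right) hS₂0
  ext s _
  have key : ∀ ρ : Measure X, ρ (S₁ ∪ S₂)ᶜ = 0 →
      ρ s = ∑' z : (s ∩ (S₁ ∪ S₂) : Set X), ρ {(z : X)} := by
    intro ρ hρ
    have h1 : ρ s = ρ (s ∩ (S₁ ∪ S₂)) + ρ (s \ (S₁ ∪ S₂)) :=
      (measure_inter_add_diff s hSm).symm
    have h2 : ρ (s \ (S₁ ∪ S₂)) = 0 :=
      measure_mono_null (fun x hx => hx.2) hρ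
    rw [h1, h2, add_zero, measure_countable_tsum (hSc.mono Set.inter_subset_right) ρ]
  rw [key μ hμS, key ν hνS]
  exact tsum_congr fun z => h z

lemma no_uniform_atom {Ω : Type*} [MeasurableSpace Ω] {Pr : Measure Ω}
    [IsProbabilityMeasure Pr] {P : Ω → Measure X}
    (hfa : ∀ z : X, 0 < Pr {ω | 0 < P ω {z}} →
      ∀ ε : ℝ≥0∞, 0 < ε → 0 < Pr {ω | P ω {z} < ε})
    {z : X} {δ : ℝ≥0∞} (hδ : 0 < δ) (h : ∀ᵐ ω ∂Pr, δ ≤ P ω {z}) : False := by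
  have hnull : Pr {ω | ¬ δ ≤ P ω {z}} = 0 := ae_iff.mp h
  have hpos : 0 < Pr {ω | 0 < P ω {z}} := by
    by_contra hc
    push_neg at hc
    have hc0 : Pr {ω | 0 < P ω {z}} = 0 := le_antisymm hc zero_le
    have hsub : {ω | 0 < P ω {z}}ᶜ ⊆ {ω | ¬ δ ≤ P ω {z}} := by
      intro ω hω
      simp only [Set.mem_compl_iff, Set.mem_setOf_eq, not_lt, le_zero_iff] at hω
      simp only [Set.mem_setOf_eq, hω, not_le]
      exact hδ
    have hbad : (1 : ℝ≥0∞) ≤ 0 := by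
      calc (1 : ℝ≥0∞) = Pr Set.univ := measure_univ.symm
        _ = Pr ({ω | 0 < P ω {z}} ∪ {ω | 0 < P ω {z}}ᶜ) := by rw [Set.union_compl_self]
        _ ≤ Pr {ω | 0 < P ω {z}} + Pr {ω | 0 < P ω {z}}ᶜ := measure_union_le _ _
        _ ≤ 0 + 0 := add_le_add hc0.le (measure_mono_null hsub hnull).le
        _ = 0 := by simp
    simp at hbad
  have h2 := hfa z hpos δ hδ
  have h3 : Pr {ω | P ω {z} < δ} = 0 :=
    measure_mono_null (fun ω hω => not_le.mpr hω) hnull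
  rw [h3] at h2
  exact lt_irrefl _ h2

end Aux

theorem stmt_6
    {X : Type*} [TopologicalSpace X] [PolishSpace X] [LocallyCompactSpace X]
    [MeasurableSpace X] [BorelSpace X]
    {k : X → X → ℝ} (hk : IsKernel k) (hk0 : IsC0Universal k)
    {H : Type*} [NormedAddCommGroup H] [InnerProductSpace ℝ H] [CompleteSpace H]
    (F : FeatureMap k H)
    {Ω : Type*} [MeasurableSpace Ω] (Pr : Measure Ω) [IsProbabilityMeasure Pr]
    (P₁ P₂ : Ω → Measure X)
    (hP₁ : ∀ ω, IsProbabilityMeasure (P₁ ω)) (hP₂ : ∀ ω, IsProbabilityMeasure (P₂ ω))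
    (hP₁m : Measurable P₁) (hP₂m : Measurable P₂)
    -- almost surely discrete random probabilities
    (hd₁ : ∀ᵐ ω ∂Pr, IsDiscreteMeasure (P₁ ω))
    (hd₂ : ∀ᵐ ω ∂Pr, IsDiscreteMeasure (P₂ ω))
    -- for every fixed atom `z` and every `ε > 0`, `P(P̃({z}) < ε) > 0`
    (hfa₁ : ∀ z : X, 0 < Pr {ω | 0 < P₁ ω {z}} →
      ∀ ε : ℝ≥0∞, 0 < ε → 0 < Pr {ω | P₁ ω {z} < ε})
    (hfa₂ : ∀ z : X, 0 < Pr {ω | 0 < P₂ ω {z}} →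
      ∀ ε : ℝ≥0∞, 0 < ε → 0 < Pr {ω | P₂ ω {z} < ε})
    (hV₁ : 0 < kerVar F Pr P₁) (hV₂ : 0 < kerVar F Pr P₂) :
    kerCorr F Pr P₁ P₂ = 1 ↔ ∀ᵐ ω ∂Pr, P₁ ω = P₂ ω := by
  obtain ⟨B, hB0, hB⟩ := featureMap_bound hk F
  -- strong measurability of the mean embeddings
  have hSM : ∀ (P : Ω → Measure X), Measurable P → (∀ ω, IsProbabilityMeasure (P ω)) →
      StronglyMeasurable fun ω => meanEmb F (P ω) := by
    intro P hPm hPp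
    let κ : Kernel Ω X := ⟨P, hPm⟩
    haveI : IsMarkovKernel κ := ⟨fun ω => hPp ω⟩
    have hu : StronglyMeasurable (Function.uncurry fun (_ : Ω) (x : X) => F.toFun x) :=
      F.stronglyMeasurable.comp_measurable measurable_snd
    exact MeasureTheory.StronglyMeasurable.integral_kernel_prod_right (κ := κ) hu
  have hembB : ∀ μ : Measure X, IsProbabilityMeasure μ → ‖meanEmb F μ‖ ≤ B := by
    intro μ hμ
    calc ‖meanEmb F μ‖ ≤ ∫ x, ‖F.toFun x‖ ∂μ := norm_integral_le_integral_norm _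
      _ ≤ ∫ _x, B ∂μ := integral_mono_of_nonneg
          (Filter.Eventually.of_forall fun x => norm_nonneg _) (integrable_const B)
          (Filter.Eventually.of_forall hB)
      _ = B := by simp
  set e₁ : Ω → H := fun ω => meanEmb F (P₁ ω) with he₁
  set e₂ : Ω → H := fun ω => meanEmb F (P₂ ω) with he₂
  have hint₁ : Integrable e₁ Pr :=
    (integrable_const B).mono' (hSM P₁ hP₁m hP₁).aestronglyMeasurable
      (Filter.Eventually.of_forall fun ω => hembB _ (hP₁ ω))
  have hint₂ : Integrable e₂ Pr :=
    (integrable_const B).mono' (hSM P₂ hP₂m hP₂).aestronglyMeasurable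
      (Filter.Eventually.of_forall fun ω => hembB _ (hP₂ ω))
  set m₁ : H := ∫ ω, e₁ ω ∂Pr with hm₁
  set m₂ : H := ∫ ω, e₂ ω ∂Pr with hm₂
  set f : Ω → H := fun ω => e₁ ω - m₁ with hfdef
  set g : Ω → H := fun ω => e₂ ω - m₂ with hgdef
  have hcov12 : kerCov F Pr P₁ P₂ = ∫ ω, ⟪f ω, g ω⟫ ∂Pr := rfl
  have hcov11 : kerVar F Pr P₁ = ∫ ω, ⟪f ω, f ω⟫ ∂Pr := rfl
  have hcov22 : kerVar F Pr P₂ = ∫ ω, ⟪g ω, g ω⟫ ∂Pr := rfl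
  constructor
  · -- forward direction
    intro hcorr
    have hmf : MemLp f 2 Pr := by
      refine (memLp_top_of_bound
        (((hSM P₁ hP₁m hP₁).sub stronglyMeasurable_const).aestronglyMeasurable)
        (B + ‖m₁‖) (Filter.Eventually.of_forall fun ω => ?_)).mono_exponent le_top
      exact (norm_sub_le _ _).trans (add_le_add_left (hembB _ (hP₁ ω)) _)
    have hmg : MemLp g 2 Pr := by
      refine (memLp_top_of_bound
        (((hSM P₂ hP₂m hP₂).sub stronglyMeasurable_const).aestronglyMeasurable)
        (B + ‖m₂‖) (Filter.Eventually.of_forall fun ω => ?_)).mono_exponent le_top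
      exact (norm_sub_le _ _).trans (add_le_add_left (hembB _ (hP₂ ω)) _)
    set Fℓ : Lp H 2 Pr := hmf.toLp f with hFl
    set Gℓ : Lp H 2 Pr := hmg.toLp g with hGl
    have hFf : Fℓ =ᵐ[Pr] f := hmf.coeFn_toLp
    have hGg : Gℓ =ᵐ[Pr] g := hmg.coeFn_toLp
    have hinnFG : ⟪Fℓ, Gℓ⟫ = kerCov F Pr P₁ P₂ := by
      rw [MeasureTheory.L2.inner_def, hcov12]
      refine integral_congr_ae ?_
      filter_upwards [hFf, hGg] with ω h1 h2
      rw [h1, h2]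
    have hinnFF : ⟪Fℓ, Fℓ⟫ = kerVar F Pr P₁ := by
      rw [MeasureTheory.L2.inner_def, hcov11]
      refine integral_congr_ae ?_
      filter_upwards [hFf] with ω h1
      rw [h1]
    have hinnGG : ⟪Gℓ, Gℓ⟫ = kerVar F Pr P₂ := by
      rw [MeasureTheory.L2.inner_def, hcov22]
      refine integral_congr_ae ?_
      filter_upwards [hGg] with ω h1
      rw [h1]
    have hnF : Real.sqrt (kerVar F Pr P₁) = ‖Fℓ‖ := by
      rw [← hinnFF, real_inner_self_eq_norm_mul_norm, Real.sqrt_mul_self (norm_nonneg _)]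
    have hnG : Real.sqrt (kerVar F Pr P₂) = ‖Gℓ‖ := by
      rw [← hinnGG, real_inner_self_eq_norm_mul_norm, Real.sqrt_mul_self (norm_nonneg _)]
    have hdenpos : 0 < Real.sqrt (kerVar F Pr P₁) * Real.sqrt (kerVar F Pr P₂) :=
      mul_pos (Real.sqrt_pos.2 hV₁) (Real.sqrt_pos.2 hV₂)
    have hcs : ⟪Fℓ, Gℓ⟫ = ‖Fℓ‖ * ‖Gℓ‖ := by
      rw [hinnFG, ← hnF, ← hnG]
      unfold kerCorr at hcorr
      rw [div_eq_one_iff_eq hdenpos.ne'] at hcorr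
      exact hcorr
    have heq : ‖Gℓ‖ • Fℓ = ‖Fℓ‖ • Gℓ := inner_eq_norm_mul_iff_real.mp hcs
    have hae : ∀ᵐ ω ∂Pr,
        Real.sqrt (kerVar F Pr P₂) • f ω = Real.sqrt (kerVar F Pr P₁) • g ω := by
      filter_upwards [Lp.coeFn_smul ‖Gℓ‖ Fℓ, Lp.coeFn_smul ‖Fℓ‖ Gℓ, hFf, hGg]
        with ω e1 e2 e3 e4
      calc Real.sqrt (kerVar F Pr P₂) • f ω = ‖Gℓ‖ • Fℓ ω := by rw [hnG, e3]
        _ = (‖Gℓ‖ • Fℓ : Lp H 2 Pr) ω := by rw [e1]; rfl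
        _ = (‖Fℓ‖ • Gℓ : Lp H 2 Pr) ω := by rw [heq]
        _ = ‖Fℓ‖ • Gℓ ω := by rw [e2]; rfl
        _ = Real.sqrt (kerVar F Pr P₁) • g ω := by rw [hnF, e4]
    set c : ℝ := Real.sqrt (kerVar F Pr P₂) / Real.sqrt (kerVar F Pr P₁) with hcdef
    have hc0 : 0 < c := div_pos (Real.sqrt_pos.2 hV₂) (Real.sqrt_pos.2 hV₁)
    have haec : ∀ᵐ ω ∂Pr, g ω = c • f ω := by
      filter_upwards [hae] with ω hω
      have h1 : Real.sqrt (kerVar F Pr P₁) ≠ 0 := (Real.sqrt_pos.2 hV₁).ne'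
      have h2 : c • f ω = g ω := by
        rw [hcdef, div_eq_inv_mul, mul_smul, hω, inv_smul_smul₀ h1]
      exact h2.symm
    have hrel : ∀ᵐ ω ∂Pr, e₂ ω = c • e₁ ω + (m₂ - c • m₁) := by
      filter_upwards [haec] with ω hω
      have h1 : e₂ ω - m₂ = c • (e₁ ω - m₁) := hω
      rw [smul_sub] at h1
      have h2 : e₂ ω = c • e₁ ω - c • m₁ + m₂ := sub_eq_iff_eq_add.mp h1
      rw [h2]; abel
    haveI : (MeasureTheory.ae Pr).NeBot := ae_neBot.mpr (IsProbabilityMeasure.ne_zero Pr)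
    obtain ⟨ω₀, hω₀rel, hω₀d₁, hω₀d₂⟩ := (hrel.and (hd₁.and hd₂)).exists
    set c'' : ℝ≥0 := Real.toNNReal c with hc''def
    have hcc : (c'' : ℝ) = c := Real.coe_toNNReal c hc0.le
    set c' : ℝ≥0∞ := (c'' : ℝ≥0∞) with hc'def
    have hc'top : c' ≠ ∞ := ENNReal.coe_ne_top
    have hc'0 : c' ≠ 0 := by
      rw [hc'def, Ne, ENNReal.coe_eq_zero, hc''def, ← NNReal.coe_eq_zero, Real.coe_toNNReal c hc0.le]
      exact hc0.ne'
    haveI := hP₁ ω₀; haveI := hP₂ ω₀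
    have hsap : ∀ (μ : Measure X) (s : Set X), (c'' • μ) s = c' * μ s := by
      intro μ s
      rw [Measure.smul_apply, ENNReal.smul_def, smul_eq_mul, hc'def]
    have hmeaseq : ∀ᵐ ω ∂Pr, ∀ z : X,
        P₂ ω {z} + c' * P₁ ω₀ {z} = c' * P₁ ω {z} + P₂ ω₀ {z} := by
      filter_upwards [hrel] with ω hω
      haveI := hP₁ ω; haveI := hP₂ ω
      have hAB : P₂ ω + c'' • P₁ ω₀ = c'' • P₁ ω + P₂ ω₀ := by
        refine meanEmb_injective hk F hk0.2 (P₂ ω + c'' • P₁ ω₀) (c'' • P₁ ω + P₂ ω₀) ?_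
        rw [meanEmb_add_measure hk F _ _, meanEmb_add_measure hk F _ _,
          meanEmb_smul_nnreal F c'', meanEmb_smul_nnreal F c'', hcc]
        show e₂ ω + c • e₁ ω₀ = c • e₁ ω + e₂ ω₀
        rw [hω, hω₀rel]; abel
      intro z
      have h1 := congrArg (fun ρ : Measure X => ρ {z}) hAB
      simp only [Measure.add_apply, hsap] at h1
      exact h1
    rcases lt_trichotomy c' 1 with hlt | heq1 | hgt
    · exfalso
      have hmass : (c'' • P₁ ω₀) Set.univ < P₂ ω₀ Set.univ := by
        rw [hsap, measure_univ, measure_univ, mul_one]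
        exact hlt
      obtain ⟨z, hz⟩ := exists_atom_lt hω₀d₂ hmass
      rw [hsap] at hz
      have hδ : 0 < P₂ ω₀ {z} - c' * P₁ ω₀ {z} := tsub_pos_of_lt hz
      refine no_uniform_atom hfa₂ (z := z) hδ ?_
      filter_upwards [hmeaseq] with ω hω
      refine tsub_le_iff_right.mpr ?_
      calc P₂ ω₀ {z} ≤ c' * P₁ ω {z} + P₂ ω₀ {z} := le_add_self
        _ = P₂ ω {z} + c' * P₁ ω₀ {z} := (hω z).symm
    · -- c' = 1
      have hsing : ∀ z : X, P₁ ω₀ {z} = P₂ ω₀ {z} := by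
        intro z
        by_contra hne
        rcases lt_or_gt_of_ne hne with hlt2 | hgt2
        · refine no_uniform_atom hfa₂ (z := z) (tsub_pos_of_lt hlt2) ?_
          filter_upwards [hmeaseq] with ω hω
          have h1 := hω z
          rw [heq1, one_mul, one_mul] at h1
          refine tsub_le_iff_right.mpr ?_
          calc P₂ ω₀ {z} ≤ P₁ ω {z} + P₂ ω₀ {z} := le_add_self
            _ = P₂ ω {z} + P₁ ω₀ {z} := h1.symm
        · refine no_uniform_atom hfa₁ (z := z) (tsub_pos_of_lt hgt2) ?_
          filter_upwards [hmeaseq] with ω hω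
          have h1 := hω z
          rw [heq1, one_mul, one_mul] at h1
          refine tsub_le_iff_right.mpr ?_
          calc P₁ ω₀ {z} ≤ P₂ ω {z} + P₁ ω₀ {z} := le_add_self
            _ = P₁ ω {z} + P₂ ω₀ {z} := h1
      filter_upwards [hmeaseq, hd₁, hd₂] with ω hω h1 h2
      refine discrete_ext h1 h2 fun z => ?_
      haveI := hP₁ ω₀
      have h3 := hω z
      rw [heq1, one_mul, one_mul, ← hsing z] at h3
      exact ((ENNReal.add_left_inj (measure_ne_top _ _)).mp h3).symm
    · exfalso
      have hdisc : IsDiscreteMeasure (c'' • P₁ ω₀) := by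
        obtain ⟨S, hSc, hS0⟩ := hω₀d₁
        exact ⟨S, hSc, by rw [hsap, hS0, mul_zero]⟩
      have hmass : P₂ ω₀ Set.univ < (c'' • P₁ ω₀) Set.univ := by
        rw [hsap, measure_univ, measure_univ, mul_one]
        exact hgt
      obtain ⟨z, hz⟩ := exists_atom_lt hdisc hmass
      rw [hsap] at hz
      have hγ : 0 < c' * P₁ ω₀ {z} - P₂ ω₀ {z} := tsub_pos_of_lt hz
      have hδ : 0 < (c' * P₁ ω₀ {z} - P₂ ω₀ {z}) / c' := ENNReal.div_pos hγ.ne' hc'top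
      refine no_uniform_atom hfa₁ (z := z) hδ ?_
      filter_upwards [hmeaseq] with ω hω
      have h2 : c' * P₁ ω₀ {z} - P₂ ω₀ {z} ≤ c' * P₁ ω {z} := by
        refine tsub_le_iff_right.mpr ?_
        calc c' * P₁ ω₀ {z} ≤ P₂ ω {z} + c' * P₁ ω₀ {z} := le_add_self
          _ = c' * P₁ ω {z} + P₂ ω₀ {z} := hω z
      exact (ENNReal.div_le_iff_le_mul (Or.inl hc'0) (Or.inl hc'top)).mpr
        (h2.trans_eq (mul_comm _ _))
  · -- reverse direction
    intro h
    have he : ∀ᵐ ω ∂Pr, e₂ ω = e₁ ω := by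
      filter_upwards [h] with ω hω
      show meanEmb F (P₂ ω) = meanEmb F (P₁ ω)
      rw [hω]
    have hm : m₂ = m₁ := integral_congr_ae he
    have hVeq : kerVar F Pr P₂ = kerVar F Pr P₁ := by
      rw [hcov22, hcov11]
      refine integral_congr_ae ?_
      filter_upwards [he] with ω hω
      show ⟪e₂ ω - m₂, e₂ ω - m₂⟫ = ⟪e₁ ω - m₁, e₁ ω - m₁⟫
      rw [hω, hm]
    have hCeq : kerCov F Pr P₁ P₂ = kerVar F Pr P₁ := by
      rw [hcov12, hcov11]
      refine integral_congr_ae ?_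
      filter_upwards [he] with ω hω
      show ⟪e₁ ω - m₁, e₂ ω - m₂⟫ = ⟪e₁ ω - m₁, e₁ ω - m₁⟫
      rw [hω, hm]
    unfold kerCorr
    rw [hCeq, hVeq, Real.mul_self_sqrt hV₁.le, div_self hV₁.ne']

end
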